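/- arXiv:2403.05719 — 6 statements merged into one kernel-verified Lean document; each statement's English description precedes it below -/
import Mathlib

section
/- For p prime and n ≥ 1, the dimension over ℤ/pℤ of the linear span of the functions x ↦ 1[⟨x,y⟩ = 0] (for y ranging over (ℤ/pℤ)^n, where 1[·] denotes the indicator, valued in ℤ/pℤ, of the condition ⟨x,y⟩ = 0 in ℤ/pℤ) inside the space of functions (ℤ/pℤ)^n → ℤ/pℤ equals C(p+n−2, n−1) + 1, where C denotes the binomial coefficient. Equivalently, the ℤ/pℤ-rank of the point-hyperplane incidence matrix W_{p,n}, whose rows and columns are indexed by x,y ∈ (ℤ/pℤ)^n and whose (x,y)-entry is 1 if ⟨x,y⟩ = 0 and 0 otherwise, equals C(p+n−2, n−1) + 1. -/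
open Finset MvPolynomial

/-- Monomial functions with exponents `≤ p - 1` are linearly independent over `ZMod p`. -/
lemma monomials_indep {p n : ℕ} [Fact p.Prime] (T : Finset (Fin n → ℕ))
    (hT : ∀ a ∈ T, ∀ i, a i ≤ p - 1) (c : (Fin n → ℕ) → ZMod p)
    (h : ∀ x : Fin n → ZMod p, ∑ a ∈ T, c a * ∏ i, x i ^ a i = 0) :
    ∀ a ∈ T, c a = 0 := by
  classical
  have hcard : Fintype.card (ZMod p) = p := ZMod.card p
  set P : MvPolynomial (Fin n) (ZMod p) :=
    ∑ a ∈ T, monomial (Finsupp.equivFunOnFinite.symm a) (c a) with hP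
  have heval : ∀ x : Fin n → ZMod p, eval x P = 0 := by
    intro x
    rw [hP, map_sum]
    rw [← h x]
    refine Finset.sum_congr rfl fun a ha => ?_
    rw [eval_monomial]
    congr 1
    rw [Finsupp.prod_pow]
    exact Finset.prod_congr rfl fun i _ => by simp
  have hmem : P ∈ restrictDegree (Fin n) (ZMod p) (Fintype.card (ZMod p) - 1) := by
    rw [mem_restrictDegree]
    intro s hs i
    have := MvPolynomial.support_sum hs
    obtain ⟨a, ha, hsa⟩ := Finset.mem_biUnion.mp this
    rw [support_monomial] at hsa
    by_cases hca : c a = 0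
    · simp [hca] at hsa
    · rw [if_neg hca, Finset.mem_singleton] at hsa
      subst hsa
      simpa [hcard] using hT a ha i
  have hP0 : P = 0 := eq_zero_of_eval_eq_zero (Fin n) (ZMod p) P heval hmem
  intro a ha
  have hco := congrArg (coeff (Finsupp.equivFunOnFinite.symm a)) hP0
  rw [hP, coeff_sum] at hco
  rw [Finset.sum_eq_single_of_mem a ha] at hco
  · simpa using hco
  · intro b hb hba
    rw [coeff_monomial, if_neg]
    exact fun hm => hba (Finsupp.equivFunOnFinite.symm.injective hm)

/-- For `p` prime and `n ≥ 1`, the dimension over `ℤ/pℤ` of the span of the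
indicator functions `x ↦ 1[⟨x,y⟩ = 0]` for `y ∈ (ℤ/pℤ)^n` equals `C(p+n−2, n−1) + 1`. -/
theorem stmt_0 (p n : ℕ) [Fact p.Prime] (hn : 1 ≤ n) :
    Module.finrank (ZMod p)
      (Submodule.span (ZMod p)
        {f : (Fin n → ZMod p) → ZMod p |
          ∃ y : Fin n → ZMod p,
            f = fun x => if (∑ i, x i * y i) = 0 then 1 else 0}) =
    Nat.choose (p + n - 2) (n - 1) + 1 := by
  classical
  have hp2 : 2 ≤ p := (Fact.out : p.Prime).two_le
  set S : Set ((Fin n → ZMod p) → ZMod p) :=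
    {f | ∃ y : Fin n → ZMod p, f = fun x => if (∑ i, x i * y i) = 0 then 1 else 0} with hS
  set T : Finset (Fin n → ℕ) := Finset.piAntidiag Finset.univ (p - 1) with hT
  have hmemT : ∀ a : Fin n → ℕ, a ∈ T ↔ ∑ i, a i = p - 1 := by
    intro a; simp [hT, Finset.mem_piAntidiag]
  have hbound : ∀ a ∈ T, ∀ i, a i ≤ p - 1 := by
    intro a ha i
    rw [hmemT] at ha
    calc a i ≤ ∑ j, a j := Finset.single_le_sum (fun _ _ => Nat.zero_le _) (mem_univ i)
    _ = p - 1 := ha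
  have h0T : (0 : Fin n → ℕ) ∉ T := by
    rw [hmemT]; simp; omega
  set mono : (Fin n → ℕ) → ((Fin n → ZMod p) → ZMod p) :=
    fun a x => ∏ i, x i ^ a i with hmono
  set b : Option ↥T → ((Fin n → ZMod p) → ZMod p) :=
    fun v => Option.elim v (fun _ => 1) (fun a => mono a.1) with hb
  -- indicator identity
  have hind : ∀ z : ZMod p, (if z = 0 then (1 : ZMod p) else 0) = 1 - z ^ (p - 1) := by
    intro z
    by_cases hz : z = 0
    · simp [hz, zero_pow (by omega : p - 1 ≠ 0)]
    · simp [hz, ZMod.pow_card_sub_one_eq_one hz]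
  -- multinomial expansion
  have hexp : ∀ x y : Fin n → ZMod p, (∑ i, x i * y i) ^ (p - 1)
      = ∑ a ∈ T, (Nat.multinomial Finset.univ a : ZMod p) *
          ((∏ i, y i ^ a i) * ∏ i, x i ^ a i) := by
    intro x y
    rw [Finset.sum_pow_eq_sum_piAntidiag, ← hT]
    refine Finset.sum_congr rfl fun a ha => ?_
    congr 1
    rw [← Finset.prod_mul_distrib]
    refine Finset.prod_congr rfl fun i _ => ?_
    rw [mul_pow, mul_comm]
  -- the indicator functions written as combination of monomials
  have hf : ∀ y : Fin n → ZMod p,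
      (fun x => if (∑ i, x i * y i) = 0 then (1 : ZMod p) else 0)
      = (fun _ => (1 : ZMod p)) - ∑ a ∈ T.attach,
          ((Nat.multinomial Finset.univ a.1 : ZMod p) * ∏ i, y i ^ a.1 i) • mono a.1 := by
    intro y
    funext x
    simp only [Pi.sub_apply, Finset.sum_apply, Pi.smul_apply, smul_eq_mul]
    rw [hind (∑ i, x i * y i), hexp x y]
    congr 1
    rw [← Finset.sum_attach T
      (fun a => (Nat.multinomial Finset.univ a : ZMod p) * ((∏ i, y i ^ a i) * ∏ i, x i ^ a i))]
    refine Finset.sum_congr rfl fun a _ => ?_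
    rw [hmono, mul_assoc]
  have h1S : (fun _ => (1 : ZMod p)) ∈ S := by
    refine ⟨0, ?_⟩
    funext x
    simp
  -- multinomial nonzero mod p
  have hmult : ∀ a ∈ T, (Nat.multinomial Finset.univ a : ZMod p) ≠ 0 := by
    intro a ha h0
    rw [ZMod.natCast_eq_zero_iff] at h0
    have hspec := Nat.multinomial_spec Finset.univ a
    have hdvd : p ∣ Nat.factorial (∑ i, a i) := by
      rw [← hspec]; exact Dvd.dvd.mul_left h0 _
    rw [(hmemT a).mp ha] at hdvd
    have := ((Fact.out : p.Prime).dvd_factorial).mp hdvd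
    omega
  -- span equality
  have hspan : Submodule.span (ZMod p) S = Submodule.span (ZMod p) (Set.range b) := by
    apply le_antisymm
    · rw [Submodule.span_le]
      rintro f ⟨y, rfl⟩
      rw [hf y]
      refine Submodule.sub_mem _ (Submodule.subset_span ⟨none, rfl⟩) ?_
      refine Submodule.sum_mem _ fun a _ => ?_
      exact Submodule.smul_mem _ _ (Submodule.subset_span ⟨some a, rfl⟩)
    · rw [Submodule.span_le]
      rintro f ⟨v, rfl⟩
      match v with
      | none => exact Submodule.subset_span h1S
      | some a =>
        rw [SetLike.mem_coe, ← Subspace.forall_mem_dualAnnihilator_apply_eq_zero_iff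
          (Submodule.span (ZMod p) S) (b (some a))]
        intro φ hφ
        have hφS : ∀ f ∈ S, φ f = 0 := fun f hfS =>
          (Submodule.mem_dualAnnihilator φ).mp hφ f (Submodule.subset_span hfS)
        have hφ1 : φ (fun _ => (1 : ZMod p)) = 0 := hφS _ h1S
        have hφm : ∀ a' ∈ T, φ (mono a') = 0 := by
          have key : ∀ x : Fin n → ZMod p,
              ∑ a' ∈ T, ((Nat.multinomial Finset.univ a' : ZMod p) * φ (mono a'))
                * ∏ i, x i ^ a' i = 0 := by
            intro y
            have h0 : φ (fun x => if (∑ i, x i * y i) = 0 then (1 : ZMod p) else 0) = 0 :=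
              hφS _ ⟨y, rfl⟩
            rw [hf y, map_sub, hφ1, map_sum] at h0
            simp only [map_smul, smul_eq_mul] at h0
            rw [zero_sub, neg_eq_zero] at h0
            rw [← h0, ← Finset.sum_attach T
              (fun a' => ((Nat.multinomial Finset.univ a' : ZMod p) * φ (mono a'))
                * ∏ i, y i ^ a' i)]
            refine Finset.sum_congr rfl fun a' _ => ?_
            ring
          have := monomials_indep T hbound
            (fun a' => (Nat.multinomial Finset.univ a' : ZMod p) * φ (mono a')) key
          intro a' ha'
          rcases mul_eq_zero.mp (this a' ha') with h | h
          · exact absurd h (hmult a' ha')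
          · exact h
        exact hφm a.1 a.2
  -- linear independence
  have hbli : LinearIndependent (ZMod p) b := by
    rw [Fintype.linearIndependent_iff]
    intro c hc
    set c' : (Fin n → ℕ) → ZMod p :=
      fun a => if h : a ∈ T then c (some ⟨a, h⟩) else c none with hc'
    have key : ∀ a ∈ insert 0 T, c' a = 0 := by
      refine monomials_indep _ ?_ _ ?_
      · intro a ha i
        rcases Finset.mem_insert.mp ha with h | h
        · subst h; simp
        · exact hbound a h i
      · intro x
        rw [Finset.sum_insert h0T]
        have hx := congrFun hc x
        rw [Finset.sum_apply] at hx
        simp only [Pi.smul_apply, smul_eq_mul] at hx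
        rw [Fintype.sum_option] at hx
        rw [Finset.univ_eq_attach] at hx
        have hrw : ∑ a ∈ T.attach, c (some a) * b (some a) x
            = ∑ a ∈ T, c' a * ∏ i, x i ^ a i := by
          rw [← Finset.sum_attach T (fun a' => c' a' * ∏ i, x i ^ a' i)]
          refine Finset.sum_congr rfl fun a _ => ?_
          have hca : c' a.1 = c (some a) := by simp [hc', a.2]
          rw [hca]
          rfl
        rw [hrw] at hx
        have h0' : c' 0 = c none := by simp [hc', h0T]
        have h0'' : (∏ i, x i ^ (0 : Fin n → ℕ) i) = 1 := by simp
        rw [h0', h0'', mul_one]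
        simpa [hb] using hx
    intro v
    match v with
    | none =>
      have := key 0 (Finset.mem_insert_self _ _)
      simpa [hc', h0T] using this
    | some a =>
      have := key a.1 (Finset.mem_insert_of_mem a.2)
      simpa [hc', a.2] using this
  rw [hspan, finrank_span_eq_card hbli, Fintype.card_option, Fintype.card_coe]
  congr 1
  -- counting: stars and bars
  have e : ↥T ≃ Sym (Fin n) (p - 1) :=
    { toFun := fun a => ⟨Finsupp.toMultiset (Finsupp.equivFunOnFinite.symm a.1), by
        rw [Finsupp.card_toMultiset, Finsupp.sum_fintype _ _ (fun _ => rfl)]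
        simpa using (hmemT a.1).mp a.2⟩
      invFun := fun m => ⟨fun i => Multiset.count i m.1, by
        rw [hmemT]
        rw [Multiset.sum_count_eq_card (fun a _ => Finset.mem_univ a)]
        exact m.2⟩
      left_inv := fun a => Subtype.ext (funext fun i => by
        simp [Finsupp.count_toMultiset])
      right_inv := fun m => Subtype.ext (by
        show Finsupp.toMultiset (Finsupp.equivFunOnFinite.symm fun i => Multiset.count i m.1)
            = m.1
        have h : (Finsupp.equivFunOnFinite.symm fun i => Multiset.count i m.1)
            = Multiset.toFinsupp m.1 := by
          ext i
          simp [Multiset.toFinsupp_apply]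
        rw [h, Multiset.toFinsupp_toMultiset]) }
  have hc := Fintype.card_congr e
  rw [Fintype.card_coe] at hc
  rw [hc, Sym.card_sym_eq_choose, Fintype.card_fin]
  rw [show n + (p - 1) - 1 = p + n - 2 by omega]
  rw [show p - 1 = (p + n - 2) - (n - 1) by omega]
  exact Nat.choose_symm (by omega)
end

section
/- The dimension of 𝓗^n over ℤ/pℤ is at most C(p^k−1+n, n), where C denotes the binomial coefficient. -/
open Finset

namespace Stmt1Aux

/-- Integer product identity for binomial coefficients (needs `a ≤ b`). -/
lemma choose_mul_choose_sum (u a b : ℕ) (hab : a ≤ b) :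
    u.choose a * u.choose b =
      ∑ l ∈ range (a + b + 1), u.choose l * (l.choose a * a.choose (a + b - l)) := by
  have step : ∀ l ∈ range (a + b + 1),
      u.choose l * (l.choose a * a.choose (a + b - l)) =
      u.choose a * ((u - a).choose (l - a) * a.choose (a + b - l)) := by
    intro l _
    rcases lt_or_ge l a with hla | hla
    · have h1 : l.choose a = 0 := Nat.choose_eq_zero_of_lt hla
      have h2 : a.choose (a + b - l) = 0 := Nat.choose_eq_zero_of_lt (by omega)
      simp [h1, h2]
    · rcases le_or_gt l u with hlu | hlu
      · have := Nat.choose_mul (n := u) (k := l) (s := a) hla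
        rw [← mul_assoc, this, mul_assoc]
      · have h1 : u.choose l = 0 := Nat.choose_eq_zero_of_lt hlu
        rcases le_or_gt a u with hau | hau
        · have h2 : (u - a).choose (l - a) = 0 := Nat.choose_eq_zero_of_lt (by omega)
          simp [h1, h2]
        · have h3 : u.choose a = 0 := Nat.choose_eq_zero_of_lt hau
          simp [h1, h3]
  rw [Finset.sum_congr rfl step, ← Finset.mul_sum]
  rcases le_or_gt a u with hau | hau
  · congr 1
    have hzero : ∀ l ∈ range (a + b + 1), l ∉ Ico a (a + b + 1) →
        (u - a).choose (l - a) * a.choose (a + b - l) = 0 := by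
      intro l hlr hl
      simp only [Finset.mem_Ico, not_and, not_lt] at hl
      simp only [Finset.mem_range] at hlr
      have : a.choose (a + b - l) = 0 := Nat.choose_eq_zero_of_lt (by omega)
      simp [this]
    rw [← Finset.sum_subset (fun l hl => by simp [Finset.mem_Ico] at hl ⊢; omega) hzero,
      Finset.sum_Ico_eq_sum_range]
    have : a + b + 1 - a = b + 1 := by omega
    rw [this]
    have := Nat.add_choose_eq (u - a) a b
    rw [Nat.sub_add_cancel hau] at this
    rw [this, Finset.Nat.sum_antidiagonal_eq_sum_range_succ_mk]
    refine Finset.sum_congr rfl fun j hj => ?_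
    congr 1
    · congr 1; omega
    · congr 1; omega
  · have h1 : u.choose a = 0 := Nat.choose_eq_zero_of_lt hau
    simp [h1]

/-- `C(w + p^k, m) ≡ C(w, m) [MOD p]` for `m < p^k`. -/
lemma choose_add_pow_cast (p : ℕ) [Fact p.Prime] (k w m : ℕ) (hm : m < p ^ k) :
    (((w + p ^ k).choose m : ZMod p)) = (w.choose m : ZMod p) := by
  rw [Nat.add_choose_eq, Finset.Nat.sum_antidiagonal_eq_sum_range_succ_mk]
  push_cast
  rw [Finset.sum_range_succ]
  have hz : ∀ j ∈ range m, (w.choose j : ZMod p) * ((p ^ k).choose (m - j) : ZMod p) = 0 := by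
    intro j hj
    have hjm : j < m := by simpa using hj
    have : ((p ^ k).choose (m - j) : ZMod p) = 0 := by
      rw [ZMod.natCast_eq_zero_iff]
      exact Nat.Prime.dvd_choose_pow (Fact.out) (by omega) (by omega)
    rw [this, mul_zero]
  rw [Finset.sum_congr rfl hz]
  simp

lemma choose_add_mul_pow_cast (p : ℕ) [Fact p.Prime] (k w m t : ℕ) (hm : m < p ^ k) :
    (((w + t * p ^ k).choose m : ZMod p)) = (w.choose m : ZMod p) := by
  induction t with
  | zero => simp
  | succ t ih =>
    have : w + (t + 1) * p ^ k = (w + t * p ^ k) + p ^ k := by ring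
    rw [this, choose_add_pow_cast p k _ m hm, ih]


section Single

variable (p q : ℕ) [Fact p.Prime] [NeZero q]

/-- The "binomial" basis functions `ZMod q → ZMod p`. -/
def fe (l : ℕ) : ZMod q → ZMod p := fun u => (u.val.choose l : ZMod p)

/-- Span of the `fe l` for `l ≤ m`. -/
def V (m : ℕ) : Submodule (ZMod p) (ZMod q → ZMod p) :=
  Submodule.span (ZMod p) (fe p q '' Set.Iic m)

lemma fe_mem {l m : ℕ} (hl : l ≤ m) : fe p q l ∈ V p q m :=
  Submodule.subset_span ⟨l, hl, rfl⟩

lemma V_mono {m m' : ℕ} (h : m ≤ m') : V p q m ≤ V p q m' :=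
  Submodule.span_mono (Set.image_mono fun _ hx => le_trans hx h)

variable {p q}

/-- Vandermonde for `fe` on `ZMod q`, `q = p ^ k`. -/
lemma fe_add {k : ℕ} (hq : q = p ^ k) {m : ℕ} (hm : m < q) (u v : ZMod q) :
    fe p q m (u + v) = ∑ j ∈ range (m + 1), fe p q j u * fe p q (m - j) v := by
  subst hq
  have hval : u.val + v.val = (u + v).val + ((u.val + v.val) / p ^ k) * (p ^ k) := by
    rw [ZMod.val_add, Nat.mul_comm, Nat.mod_add_div (u.val + v.val) (p ^ k)]
  have h1 : ((u.val + v.val).choose m : ZMod p) = (((u + v).val).choose m : ZMod p) := by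
    rw [hval]
    exact choose_add_mul_pow_cast p k _ m _ hm
  simp only [fe]
  rw [← h1, Nat.add_choose_eq, Finset.Nat.sum_antidiagonal_eq_sum_range_succ_mk]
  push_cast
  rfl

/-- Product of two basis functions is in the span of low-degree ones. -/
lemma fe_mul_fe_mem {a b m : ℕ} (hab : a + b ≤ m) :
    (fun u => fe p q a u * fe p q b u) ∈ V p q m := by
  -- WLOG a ≤ b
  suffices H : ∀ a b : ℕ, a ≤ b → a + b ≤ m → (fun u => fe p q a u * fe p q b u) ∈ V p q m by
    rcases le_total a b with h | h
    · exact H a b h hab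
    · have := H b a h (by omega)
      simpa [mul_comm] using this
  intro a b hab' habm
  have key : (fun u => fe p q a u * fe p q b u) =
      ∑ l ∈ range (a + b + 1),
        ((l.choose a * a.choose (a + b - l) : ℕ) : ZMod p) • fe p q l := by
    funext u
    simp only [Finset.sum_apply, Pi.smul_apply, smul_eq_mul]
    have := choose_mul_choose_sum u.val a b hab'
    have hcast := congrArg (fun t : ℕ => (t : ZMod p)) this
    push_cast at hcast
    simp only [fe, Pi.smul_apply, smul_eq_mul]
    rw [hcast]
    refine Finset.sum_congr rfl fun l _ => by push_cast; ring
  rw [key]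
  exact Submodule.sum_mem _ fun l hl =>
    Submodule.smul_mem _ _ (fe_mem p q (by simp at hl; omega))

/-- Products of elements of `V a` and `V b` lie in `V m` when `a + b ≤ m`. -/
lemma mul_mem_V {a b m : ℕ} (hab : a + b ≤ m) {f g : ZMod q → ZMod p}
    (hf : f ∈ V p q a) (hg : g ∈ V p q b) : (fun u => f u * g u) ∈ V p q m := by
  induction hf using Submodule.span_induction with
  | mem f' hf' =>
    obtain ⟨l, hl, rfl⟩ := hf'
    induction hg using Submodule.span_induction with
    | mem g' hg' =>
      obtain ⟨l', hl', rfl⟩ := hg'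
      exact fe_mul_fe_mem (by simp only [Set.mem_Iic] at hl hl'; omega)
    | zero =>
      have : (fun u => fe p q l u * (0 : ZMod q → ZMod p) u) = (0 : ZMod q → ZMod p) := by
        funext u; simp
      rw [this]; exact Submodule.zero_mem _
    | add x y hx hy ihx ihy =>
      have : (fun u => fe p q l u * (x + y) u)
          = (fun u => fe p q l u * x u) + fun u => fe p q l u * y u := by
        funext u; simp [mul_add]
      rw [this]; exact Submodule.add_mem _ ihx ihy
    | smul c x hx ihx =>
      have : (fun u => fe p q l u * (c • x) u) = c • fun u => fe p q l u * x u := by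
        funext u; simp [Pi.smul_apply, smul_eq_mul]; ring
      rw [this]; exact Submodule.smul_mem _ _ ihx
  | zero =>
    have : (fun u => (0 : ZMod q → ZMod p) u * g u) = (0 : ZMod q → ZMod p) := by
      funext u; simp
    rw [this]; exact Submodule.zero_mem _
  | add x y hx hy ihx ihy =>
    have : (fun u => (x + y) u * g u)
        = (fun u => x u * g u) + fun u => y u * g u := by
      funext u; simp [add_mul]
    rw [this]; exact Submodule.add_mem _ ihx ihy
  | smul c x hx ihx =>
    have : (fun u => (c • x) u * g u) = c • fun u => x u * g u := by
      funext u; simp [Pi.smul_apply, smul_eq_mul]; ring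
    rw [this]; exact Submodule.smul_mem _ _ ihx

/-- Scaling the argument preserves the filtration. -/
lemma fe_smul_arg_mem {k : ℕ} (hq : q = p ^ k) (c : ZMod q) {m : ℕ} (hm : m ≤ q - 1) :
    (fun u => fe p q m (c * u)) ∈ V p q m := by
  have hq1 : 1 ≤ q := Nat.one_le_iff_ne_zero.2 (NeZero.ne q)
  have hmq : m < q := by omega
  have main : ∀ N : ℕ, ∀ m' : ℕ, m' < q →
      (fun u => fe p q m' ((N : ZMod q) * u)) ∈ V p q m' := by
    intro N
    induction N with
    | zero =>
      intro m' _
      have : (fun u : ZMod q => fe p q m' ((0 : ℕ) * u))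
          = ((Nat.choose 0 m' : ZMod p)) • fe p q 0 := by
        funext u
        simp only [Nat.cast_zero, zero_mul, fe, Pi.smul_apply, smul_eq_mul]
        rw [ZMod.val_zero]
        simp [Nat.choose]
      rw [this]
      exact Submodule.smul_mem _ _ (fe_mem p q (Nat.zero_le _))
    | succ N ih =>
      intro m' hm'
      have hrw : (fun u => fe p q m' (((N + 1 : ℕ) : ZMod q) * u)) =
          ∑ j ∈ range (m' + 1), fun u => fe p q j ((N : ZMod q) * u) * fe p q (m' - j) u := by
        funext u
        rw [Finset.sum_apply]
        have : ((N + 1 : ℕ) : ZMod q) * u = (N : ZMod q) * u + u := by push_cast; ring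
        rw [this, fe_add hq hm']
      rw [hrw]
      refine Submodule.sum_mem _ fun j hj => ?_
      have hjm : j ≤ m' := by simp at hj; omega
      exact mul_mem_V (by omega) (ih j (by omega)) (fe_mem p q (le_refl _))
  have := main c.val m hmq
  rwa [ZMod.natCast_rightInverse c] at this

/-- Everything is in `V (q-1)`: the delta functions are. -/
lemma delta_mem (hq1 : 1 ≤ q) : ∀ t j : ℕ, q - 1 - j = t → j ≤ q - 1 →
    (fun u : ZMod q => if u.val = j then (1 : ZMod p) else 0) ∈ V p q (q - 1) := by
  intro t
  induction t using Nat.strong_induction_on with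
  | _ t ih =>
    intro j htj hj
    have key : (fun u : ZMod q => if u.val = j then (1 : ZMod p) else 0) =
        fe p q j - ∑ w ∈ Ioc j (q - 1), (w.choose j : ZMod p) •
          fun u : ZMod q => if u.val = w then (1 : ZMod p) else 0 := by
      funext u
      have hvu : u.val < q := ZMod.val_lt u
      simp only [Pi.sub_apply, Finset.sum_apply, Pi.smul_apply, smul_eq_mul, mul_ite,
        mul_one, mul_zero, fe]
      rw [Finset.sum_ite_eq (Ioc j (q - 1)) u.val (fun w => (w.choose j : ZMod p))]
      by_cases h : u.val = j
      · subst h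
        simp [Nat.choose_self, Finset.mem_Ioc]
      · rcases lt_or_ge u.val j with hlt | hge
        · rw [Nat.choose_eq_zero_of_lt hlt]
          have hnot : u.val ∉ Ioc j (q - 1) := by
            simp only [Finset.mem_Ioc, not_and, not_le]; omega
          simp [h, hnot]
        · have : u.val ∈ Ioc j (q - 1) := by simp [Finset.mem_Ioc]; omega
          simp [h, this]
    rw [key]
    refine Submodule.sub_mem _ (fe_mem p q hj) (Submodule.sum_mem _ fun w hw => ?_)
    simp only [Finset.mem_Ioc] at hw
    exact Submodule.smul_mem _ _ (ih (q - 1 - w) (by omega) w rfl hw.2)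

lemma mem_V_top (g : ZMod q → ZMod p) : g ∈ V p q (q - 1) := by
  have hq1 : 1 ≤ q := Nat.one_le_iff_ne_zero.2 (NeZero.ne q)
  have key : g = ∑ j ∈ range q, g ((j : ℕ) : ZMod q) •
      fun u : ZMod q => if u.val = j then (1 : ZMod p) else 0 := by
    funext u
    rw [Finset.sum_apply]
    simp only [Pi.smul_apply, smul_eq_mul, mul_ite, mul_one, mul_zero]
    rw [Finset.sum_ite_eq (range q) u.val (fun j => g ((j : ℕ) : ZMod q))]
    have : u.val ∈ range q := by simp [ZMod.val_lt u]
    simp [this, ZMod.natCast_rightInverse u]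
  rw [key]
  exact Submodule.sum_mem _ fun j hj =>
    Submodule.smul_mem _ _ (delta_mem hq1 (q - 1 - j) j rfl (by simp at hj; omega))

end Single


section Multi

variable (p q n : ℕ) [Fact p.Prime] [NeZero q]

/-- Monomial functions. -/
def Mon (α : Fin n → ℕ) : (Fin n → ZMod q) → ZMod p := fun x => ∏ i, fe p q (α i) (x i)

/-- Span of monomials of total degree at most `m` supported in `s`. -/
def W (s : Finset (Fin n)) (m : ℕ) : Submodule (ZMod p) ((Fin n → ZMod q) → ZMod p) :=
  Submodule.span (ZMod p)
    { f | ∃ α : Fin n → ℕ, (∑ i, α i) ≤ m ∧ (∀ i ∉ s, α i = 0) ∧ f = Mon p q n α }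

variable {p q n}

lemma W_mono {s s' : Finset (Fin n)} {m m' : ℕ} (hs : s ⊆ s') (hm : m ≤ m') :
    W p q n s m ≤ W p q n s' m' :=
  Submodule.span_mono (fun f ⟨α, h1, h2, h3⟩ =>
    ⟨α, le_trans h1 hm, fun i hi => h2 i (fun hin => hi (hs hin)), h3⟩)

lemma cross_mem {s : Finset (Fin n)} {i₀ : Fin n} (hi₀ : i₀ ∉ s)
    {g : ZMod q → ZMod p} {h : (Fin n → ZMod q) → ZMod p} {a b m : ℕ}
    (hab : a + b ≤ m) (hg : g ∈ V p q a) (hh : h ∈ W p q n s b) :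
    (fun x => g (x i₀) * h x) ∈ W p q n (insert i₀ s) m := by
  classical
  induction hg using Submodule.span_induction with
  | mem g' hg' =>
    obtain ⟨l, hl, rfl⟩ := hg'
    simp only [Set.mem_Iic] at hl
    induction hh using Submodule.span_induction with
    | mem h' hh' =>
      obtain ⟨α, hα1, hα2, rfl⟩ := hh'
      refine Submodule.subset_span ⟨Function.update α i₀ l, ?_, ?_, ?_⟩
      · rw [Finset.sum_update_of_mem (Finset.mem_univ i₀)]
        have h1 : ∑ i ∈ univ \ {i₀}, α i ≤ ∑ i, α i :=
          Finset.sum_le_sum_of_subset (Finset.sdiff_subset)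
        omega
      · intro i hi
        have hne : i ≠ i₀ := fun hh => hi (hh ▸ Finset.mem_insert_self i₀ s)
        rw [Function.update_of_ne hne]
        exact hα2 i (fun hin => hi (Finset.mem_insert_of_mem hin))
      · funext x
        have h0 : α i₀ = 0 := hα2 i₀ hi₀
        have hfe0 : fe p q (α i₀) (x i₀) = 1 := by
          rw [h0]; simp [fe]
        have hupd : ∀ i, fe p q (Function.update α i₀ l i) (x i) =
            Function.update (fun i => fe p q (α i) (x i)) i₀ (fe p q l (x i₀)) i := by
          intro i
          rcases eq_or_ne i i₀ with rfl | hne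
          · simp
          · simp [Function.update_of_ne hne]
        simp only [Mon]
        rw [Finset.prod_congr rfl (fun i _ => hupd i),
          Finset.prod_update_of_mem (Finset.mem_univ i₀),
          Finset.prod_eq_mul_prod_sdiff_singleton_of_mem (Finset.mem_univ i₀)
            (fun i => fe p q (α i) (x i)), hfe0, one_mul]
    | zero =>
      have : (fun x => fe p q l (x i₀) * (0 : (Fin n → ZMod q) → ZMod p) x)
          = (0 : (Fin n → ZMod q) → ZMod p) := by funext x; simp
      rw [this]; exact Submodule.zero_mem _
    | add x y hx hy ihx ihy =>
      have : (fun z => fe p q l (z i₀) * (x + y) z)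
          = (fun z => fe p q l (z i₀) * x z) + fun z => fe p q l (z i₀) * y z := by
        funext z; simp [mul_add]
      rw [this]; exact Submodule.add_mem _ ihx ihy
    | smul c x hx ihx =>
      have : (fun z => fe p q l (z i₀) * (c • x) z) = c • fun z => fe p q l (z i₀) * x z := by
        funext z; simp only [Pi.smul_apply, smul_eq_mul]; ring
      rw [this]; exact Submodule.smul_mem _ _ ihx
  | zero =>
    have : (fun x => (0 : ZMod q → ZMod p) (x i₀) * h x)
        = (0 : (Fin n → ZMod q) → ZMod p) := by funext x; simp
    rw [this]; exact Submodule.zero_mem _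
  | add x y hx hy ihx ihy =>
    have : (fun z => (x + y) (z i₀) * h z)
        = (fun z => x (z i₀) * h z) + fun z => y (z i₀) * h z := by
      funext z; simp [add_mul]
    rw [this]; exact Submodule.add_mem _ ihx ihy
  | smul c x hx ihx =>
    have : (fun z => (c • x) (z i₀) * h z) = c • fun z => x (z i₀) * h z := by
      funext z; simp only [Pi.smul_apply, smul_eq_mul]; ring
    rw [this]; exact Submodule.smul_mem _ _ ihx

lemma fe_sum_mem {k : ℕ} (hq : q = p ^ k) (b : Fin n → ZMod q) (s : Finset (Fin n)) :
    ∀ m : ℕ, m ≤ q - 1 →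
      (fun x : Fin n → ZMod q => fe p q m (∑ i ∈ s, x i * b i)) ∈ W p q n s m := by
  classical
  induction s using Finset.induction_on with
  | empty =>
    intro m hm
    have : (fun x : Fin n → ZMod q => fe p q m (∑ i ∈ (∅ : Finset (Fin n)), x i * b i))
        = ((Nat.choose 0 m : ZMod p)) • Mon p q n (fun _ => 0) := by
      funext x
      simp only [Finset.sum_empty, fe, Pi.smul_apply, smul_eq_mul, Mon]
      rw [ZMod.val_zero]
      simp [fe]
    rw [this]
    exact Submodule.smul_mem _ _
      (Submodule.subset_span ⟨fun _ => 0, by simp, fun _ _ => rfl, rfl⟩)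
  | insert i₀ s hi₀ ih =>
    intro m hm
    have hq1 : 1 ≤ q := Nat.one_le_iff_ne_zero.2 (NeZero.ne q)
    have hm' : m < q := by omega
    have hrw : (fun x : Fin n → ZMod q => fe p q m (∑ i ∈ insert i₀ s, x i * b i)) =
        ∑ j ∈ range (m + 1),
          fun x : Fin n → ZMod q =>
            fe p q j (b i₀ * x i₀) * fe p q (m - j) (∑ i ∈ s, x i * b i) := by
      funext x
      rw [Finset.sum_apply, Finset.sum_insert hi₀, mul_comm (x i₀) (b i₀), fe_add hq hm']
    rw [hrw]
    refine Submodule.sum_mem _ fun j hj => ?_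
    have hjm : j ≤ m := by simp at hj; omega
    exact cross_mem hi₀ (show j + (m - j) ≤ m by omega)
      (fe_smul_arg_mem hq (b i₀) (by omega))
      (ih (m - j) (by omega))

lemma indicator_mem {k : ℕ} (hq : q = p ^ k) (a b : Fin n → ZMod q) :
    (fun x : Fin n → ZMod q => if (∑ i, (x i - a i) * b i) = 0 then (1 : ZMod p) else 0)
      ∈ W p q n Finset.univ (q - 1) := by
  classical
  set c : ZMod q := ∑ i, a i * b i with hc
  set L : (ZMod q → ZMod p) →ₗ[ZMod p] ((Fin n → ZMod q) → ZMod p) :=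
    LinearMap.funLeft (ZMod p) (ZMod p) (fun x : Fin n → ZMod q => ∑ i, x i * b i) with hL
  set g : ZMod q → ZMod p := fun u => if u = c then 1 else 0 with hgdef
  have heq : (fun x : Fin n → ZMod q =>
      if (∑ i, (x i - a i) * b i) = 0 then (1 : ZMod p) else 0) = L g := by
    funext x
    have hsub : ∑ i, (x i - a i) * b i = (∑ i, x i * b i) - c := by
      rw [hc, ← Finset.sum_sub_distrib]
      exact Finset.sum_congr rfl fun i _ => by ring
    simp only [hL, LinearMap.funLeft_apply, hgdef, hsub, sub_eq_zero]
  rw [heq]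
  have hg : g ∈ V p q (q - 1) := mem_V_top g
  have hmap : L g ∈ Submodule.map L (V p q (q - 1)) := Submodule.mem_map_of_mem hg
  rw [V, Submodule.map_span] at hmap
  refine Submodule.span_le.mpr ?_ hmap
  rintro f ⟨g', ⟨l, hl, rfl⟩, rfl⟩
  simp only [Set.mem_Iic] at hl
  have : L (fe p q l) = fun x : Fin n → ZMod q => fe p q l (∑ i, x i * b i) := rfl
  rw [this]
  exact W_mono (Finset.Subset.refl _) hl (fe_sum_mem hq b Finset.univ l hl)

end Multi

/-- Counting: multisets trick. -/
lemma card_le_choose (n d : ℕ) :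
    ((Fintype.piFinset fun _ : Fin n => Finset.range (d + 1)).filter
        (fun α => ∑ i, α i ≤ d)).card ≤ (d + n).choose n := by
  classical
  set T := (Fintype.piFinset fun _ : Fin n => Finset.range (d + 1)).filter
      (fun α => ∑ i, α i ≤ d) with hT
  set mf : (Fin n → ℕ) → Multiset (Fin (n + 1)) := fun α =>
    Multiset.replicate (d - ∑ i, α i) (Fin.last n)
      + ∑ i, Multiset.replicate (α i) (i.castSucc) with hmf
  have hcount : ∀ α (i : Fin n), (mf α).count i.castSucc = α i := by
    intro α i
    simp only [hmf, Multiset.count_add, Multiset.count_replicate, Multiset.count_sum',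
      Fin.castSucc_inj]
    rw [if_neg (Fin.castSucc_lt_last i).ne',
      Finset.sum_ite_eq' Finset.univ i (fun j => α j)]
    simp
  have hcardsum : ∀ (s : Finset (Fin n)) (α : Fin n → ℕ),
      Multiset.card (∑ i ∈ s, Multiset.replicate (α i) (i.castSucc : Fin (n+1))) = ∑ i ∈ s, α i := by
    intro s α
    induction s using Finset.induction_on with
    | empty => simp
    | insert j s h ih =>
      rw [Finset.sum_insert h, Finset.sum_insert h]
      simp [ih]
  have hcard : ∀ α ∈ T, Multiset.card (mf α) = d := by
    intro α hα
    rw [hT, Finset.mem_filter] at hα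
    rw [hmf]
    simp only [Multiset.card_add, Multiset.card_replicate]
    rw [hcardsum Finset.univ α]
    omega
  have hmaps : ∀ α ∈ T, mf α ∈ (Finset.univ : Finset (Sym (Fin (n + 1)) d)).image
      Sym.toMultiset := by
    intro α hα
    exact Finset.mem_image.mpr ⟨⟨mf α, hcard α hα⟩, Finset.mem_univ _, rfl⟩
  have hinj : Set.InjOn mf T := by
    intro α hα β hβ h
    funext i
    rw [← hcount α i, ← hcount β i, h]
  calc T.card ≤ ((Finset.univ : Finset (Sym (Fin (n + 1)) d)).image Sym.toMultiset).card :=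
        Finset.card_le_card_of_injOn mf hmaps hinj
    _ ≤ (Finset.univ : Finset (Sym (Fin (n + 1)) d)).card := Finset.card_image_le
    _ = Fintype.card (Sym (Fin (n + 1)) d) := Finset.card_univ
    _ = (d + n).choose n := by
        rw [Sym.card_sym_eq_choose]
        have h1 : Fintype.card (Fin (n + 1)) + d - 1 = d + n := by
          rw [Fintype.card_fin]; omega
        rw [h1]
        have h2 := Nat.choose_symm (Nat.le_add_left n d)
        have h3 : d + n - n = d := by omega
        rw [h3] at h2
        omega

end Stmt1Aux


/-- The dimension of `𝓗^n` (the span over `ℤ/pℤ` of indicator functions of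
affine hyperplanes `H_b(a)` in `R^n`, `R = ℤ/p^kℤ`, `b` a direction) is at most
`C(p^k−1+n, n)`. -/
theorem stmt_1 (p k n : ℕ) [Fact p.Prime] (hk : 1 ≤ k) :
    Module.finrank (ZMod p)
      (Submodule.span (ZMod p)
        {f : (Fin n → ZMod (p ^ k)) → ZMod p |
          ∃ (a b : Fin n → ZMod (p ^ k)), (∃ i, IsUnit (b i)) ∧
            f = fun x => if (∑ i, (x i - a i) * b i) = 0 then 1 else 0}) ≤
    Nat.choose (p ^ k - 1 + n) n := by
  classical
  haveI : NeZero (p ^ k) := ⟨pow_ne_zero _ (Fact.out : p.Prime).ne_zero⟩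
  set q := p ^ k with hqdef
  have hq : q = p ^ k := rfl
  set d := q - 1 with hd
  set T : Finset (Fin n → ℕ) :=
    (Fintype.piFinset fun _ : Fin n => Finset.range (d + 1)).filter
      (fun α => ∑ i, α i ≤ d) with hT
  set G : Finset ((Fin n → ZMod q) → ZMod p) := T.image (Stmt1Aux.Mon p q n) with hG
  have hWle : Stmt1Aux.W p q n Finset.univ d ≤ Submodule.span (ZMod p) (G : Set _) := by
    rw [Stmt1Aux.W, Submodule.span_le]
    rintro f ⟨α, h1, _, rfl⟩
    refine Submodule.subset_span ?_
    simp only [hG, Finset.coe_image, Set.mem_image, Finset.mem_coe]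
    refine ⟨α, ?_, rfl⟩
    rw [hT, Finset.mem_filter]
    refine ⟨Fintype.mem_piFinset.mpr fun i => ?_, h1⟩
    rw [Finset.mem_range]
    have : α i ≤ ∑ j, α j :=
      Finset.single_le_sum (fun j _ => Nat.zero_le (α j)) (Finset.mem_univ i)
    omega
  have hSle : Submodule.span (ZMod p)
      {f : (Fin n → ZMod q) → ZMod p |
        ∃ (a b : Fin n → ZMod q), (∃ i, IsUnit (b i)) ∧
          f = fun x => if (∑ i, (x i - a i) * b i) = 0 then 1 else 0} ≤
      Submodule.span (ZMod p) (G : Set _) := by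
    rw [Submodule.span_le]
    rintro f ⟨a, b, _, rfl⟩
    exact hWle (Stmt1Aux.indicator_mem hq a b)
  have hfin : FiniteDimensional (ZMod p)
      (Submodule.span (ZMod p) (↑G : Set ((Fin n → ZMod q) → ZMod p))) :=
    FiniteDimensional.span_finset (ZMod p) G
  refine le_trans (Submodule.finrank_mono hSle) ?_
  refine le_trans (finrank_span_finset_le_card G) ?_
  refine le_trans Finset.card_image_le ?_
  have := Stmt1Aux.card_le_choose n d
  have hdn : d + n = p ^ k - 1 + n := by rw [hd, hqdef]
  rw [hdn] at this
  exact this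
end

section
/- Let n ≥ 2 and k ≥ 1. Then the dimension over ℤ/pℤ of the span of the functions x ↦ 1[⟨x,y⟩ = 0 in ℤ/p^kℤ] (for y ranging over all of (ℤ/p^kℤ)^n) inside functions (ℤ/p^kℤ)^n → ℤ/pℤ is at most 1 + Σ_{j=1}^{k} d_j, where d_j is the dimension over ℤ/pℤ of the span of the functions x ↦ 1[⟨x,b⟩ = 0 in ℤ/p^jℤ] inside functions (ℤ/p^jℤ)^n → ℤ/pℤ, with b ranging over all directions of (ℤ/p^jℤ)^n. -/
open Module Submodule

private lemma finrank_finsetSup_le {K V ι : Type*} [Field K] [AddCommGroup V] [Module K V]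
    [FiniteDimensional K V] (s : Finset ι) (W : ι → Submodule K V) :
    finrank K ↥(s.sup W) ≤ ∑ j ∈ s, finrank K ↥(W j) := by
  classical
  induction s using Finset.cons_induction with
  | empty => simp
  | cons a s ha ih =>
    rw [Finset.sup_cons, Finset.sum_cons]
    exact (Submodule.finrank_add_le_finrank_add_finrank _ _).trans (Nat.add_le_add le_rfl ih)

private lemma key_lemma (p k n : ℕ) [Fact p.Prime] (hk : 1 ≤ k) (y : Fin n → ZMod (p ^ k))
    (hy : y ≠ 0) :
    ∃ j ∈ Finset.Icc 1 k, ∃ b : Fin n → ZMod (p ^ j), (∃ i, IsUnit (b i)) ∧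
      ∀ x : Fin n → ZMod (p ^ k),
        ((∑ i, x i * y i) = 0 ↔ (∑ i, (ZMod.cast (x i) : ZMod (p ^ j)) * b i) = 0) := by
  classical
  have hp : p.Prime := Fact.out
  haveI : NeZero (p ^ k) := ⟨pow_ne_zero k hp.ne_zero⟩
  obtain ⟨i₁, hi₁'⟩ := Function.ne_iff.mp hy
  have hi₁ : y i₁ ≠ 0 := by simpa using hi₁'
  set F : Fin n → ℕ := fun i => if y i = 0 then k else padicValNat p (y i).val with hF
  have hvalne : ∀ i, y i ≠ 0 → (y i).val ≠ 0 := fun i hi h =>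
    hi (by rw [← ZMod.natCast_zmod_val (y i), h, Nat.cast_zero])
  have hFlt : ∀ i, y i ≠ 0 → F i < k := by
    intro i hi
    have hdvd : p ^ padicValNat p (y i).val ∣ (y i).val := pow_padicValNat_dvd
    have hlt : p ^ padicValNat p (y i).val < p ^ k :=
      lt_of_le_of_lt (Nat.le_of_dvd (Nat.pos_of_ne_zero (hvalne i hi)) hdvd) (ZMod.val_lt (y i))
    simpa [hF, hi] using (Nat.pow_lt_pow_iff_right hp.one_lt).mp hlt
  have hne : (Finset.univ : Finset (Fin n)).Nonempty := ⟨i₁, Finset.mem_univ _⟩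
  obtain ⟨i₀, -, hi₀⟩ := Finset.exists_mem_eq_inf' hne F
  have hmin : ∀ i, F i₀ ≤ F i := fun i => hi₀ ▸ Finset.inf'_le F (Finset.mem_univ i)
  have hklt : F i₀ < k := lt_of_le_of_lt (hmin i₁) (hFlt i₁ hi₁)
  have hyi₀ : y i₀ ≠ 0 := fun h => by simp [hF, h] at hklt
  set m := padicValNat p (y i₀).val with hm
  have hFi₀ : F i₀ = m := by simp [hF, hyi₀, hm]
  have hmlt : m < k := hFi₀ ▸ hklt
  have hmle : ∀ i, y i ≠ 0 → m ≤ padicValNat p (y i).val := by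
    intro i hi
    have h1 := hmin i
    rw [hFi₀] at h1
    simpa [hF, hi] using h1
  set j := k - m with hj
  have hjk : m + j = k := by omega
  haveI : NeZero (p ^ j) := ⟨pow_ne_zero j hp.ne_zero⟩
  refine ⟨j, Finset.mem_Icc.mpr ⟨by omega, by omega⟩, ?_⟩
  have hdvdall : ∀ i, p ^ m ∣ (y i).val := by
    intro i
    by_cases hi : y i = 0
    · simp [hi]
    · exact dvd_trans (pow_dvd_pow p (hmle i hi)) pow_padicValNat_dvd
  set c : Fin n → ℕ := fun i => (y i).val / p ^ m with hc
  have hvc : ∀ i, (y i).val = p ^ m * c i := fun i => (Nat.mul_div_cancel' (hdvdall i)).symm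
  have hyc : ∀ i, ((p ^ m * c i : ℕ) : ZMod (p ^ k)) = y i := by
    intro i
    rw [← hvc i]
    exact ZMod.natCast_zmod_val (y i)
  refine ⟨fun i => (c i : ZMod (p ^ j)), ⟨i₀, ?_⟩, ?_⟩
  · rw [ZMod.isUnit_iff_coprime]
    refine Nat.Coprime.pow_right _ (Nat.Coprime.symm ((Nat.Prime.coprime_iff_not_dvd hp).mpr ?_))
    intro hpd
    have h1 : p ^ (m + 1) ∣ (y i₀).val := by
      rw [hvc i₀, pow_succ]
      exact Nat.mul_dvd_mul_left _ hpd
    have h2 := (padicValNat_dvd_iff_le (hvalne i₀ hyi₀)).mp h1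
    omega
  · intro x
    show _ ↔ (∑ i, (ZMod.cast (x i) : ZMod (p ^ j)) * ((c i : ℕ) : ZMod (p ^ j))) = 0
    have hsum : (∑ i, x i * y i)
        = ((p ^ m : ℕ) : ZMod (p ^ k)) * ∑ i, x i * ((c i : ℕ) : ZMod (p ^ k)) := by
      rw [Finset.mul_sum]
      refine Finset.sum_congr rfl fun i _ => ?_
      rw [← hyc i]
      push_cast
      ring
    set z := ∑ i, x i * ((c i : ℕ) : ZMod (p ^ k)) with hz
    have hdd : (p : ℕ) ^ j ∣ p ^ k := pow_dvd_pow p (by omega)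
    have hcastz : ((z.val : ℕ) : ZMod (p ^ j))
        = ∑ i, (ZMod.cast (x i) : ZMod (p ^ j)) * ((c i : ℕ) : ZMod (p ^ j)) := by
      have h1 : ((z.val : ℕ) : ZMod (p ^ j)) = ZMod.castHom hdd (ZMod (p ^ j)) z := by
        rw [ZMod.castHom_apply, ZMod.cast_eq_val]
      rw [h1, hz, map_sum]
      refine Finset.sum_congr rfl fun i _ => ?_
      rw [map_mul, map_natCast, ZMod.castHom_apply]
    have hmul : ((p ^ m : ℕ) : ZMod (p ^ k)) * z = ((p ^ m * z.val : ℕ) : ZMod (p ^ k)) := by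
      rw [Nat.cast_mul, ZMod.natCast_zmod_val]
    rw [hsum, hmul, ZMod.natCast_eq_zero_iff, ← hcastz,
      ZMod.natCast_eq_zero_iff]
    have hpk : p ^ k = p ^ m * p ^ j := by rw [← pow_add, hjk]
    have h2 : p ^ m * p ^ j ∣ p ^ m * z.val ↔ p ^ j ∣ z.val :=
      Nat.mul_dvd_mul_iff_left (pow_pos hp.pos m)
    rw [← hpk] at h2
    exact h2

/-- For `n ≥ 2`, `k ≥ 1`, the `ℤ/pℤ`-dimension of the span of the functions
`x ↦ 1[⟨x,y⟩ = 0]` on `(ℤ/p^kℤ)^n` (over all `y`) is at most `1 + Σ_{j=1}^{k} d_j`, where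
`d_j` is the dimension of the span of `x ↦ 1[⟨x,b⟩ = 0]` on `(ℤ/p^jℤ)^n` over directions `b`. -/
theorem stmt_3 (p k n : ℕ) [Fact p.Prime] (hn : 2 ≤ n) (hk : 1 ≤ k) :
    Module.finrank (ZMod p)
      (Submodule.span (ZMod p)
        {f : (Fin n → ZMod (p ^ k)) → ZMod p |
          ∃ y : Fin n → ZMod (p ^ k),
            f = fun x => if (∑ i, x i * y i) = 0 then 1 else 0}) ≤
    1 + ∑ j ∈ Finset.Icc 1 k,
      Module.finrank (ZMod p)
        (Submodule.span (ZMod p)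
          {f : (Fin n → ZMod (p ^ j)) → ZMod p |
            ∃ b : Fin n → ZMod (p ^ j), (∃ i, IsUnit (b i)) ∧
              f = fun x => if (∑ i, x i * b i) = 0 then 1 else 0}) := by
  classical
  have hp : p.Prime := Fact.out
  haveI : NeZero (p ^ k) := ⟨pow_ne_zero k hp.ne_zero⟩
  set V := (Fin n → ZMod (p ^ k)) → ZMod p with hV
  let C : ∀ j : ℕ, ((Fin n → ZMod (p ^ j)) → ZMod p) →ₗ[ZMod p] V := fun j =>
    LinearMap.funLeft (ZMod p) (ZMod p) (fun (x : Fin n → ZMod (p ^ k)) i => ZMod.cast (x i))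
  let Sj : ∀ j : ℕ, Set ((Fin n → ZMod (p ^ j)) → ZMod p) := fun j =>
    {f | ∃ b : Fin n → ZMod (p ^ j), (∃ i, IsUnit (b i)) ∧
          f = fun x => if (∑ i, x i * b i) = 0 then 1 else 0}
  let W : ℕ → Submodule (ZMod p) V := fun j => (Submodule.span (ZMod p) (Sj j)).map (C j)
  let g : V := fun _ => 1
  have hle : Submodule.span (ZMod p)
      {f : V | ∃ y : Fin n → ZMod (p ^ k),
          f = fun x => if (∑ i, x i * y i) = 0 then 1 else 0}
      ≤ Submodule.span (ZMod p) {g} ⊔ (Finset.Icc 1 k).sup W := by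
    rw [Submodule.span_le]
    rintro f ⟨y, rfl⟩
    by_cases hy : y = 0
    · have hfg : (fun x => if (∑ i, x i * y i) = 0 then 1 else 0 : V) = g := by
        funext x
        simp [hy, g]
      rw [hfg]
      exact SetLike.mem_coe.mpr
        (Submodule.mem_sup_left (Submodule.subset_span (Set.mem_singleton g)))
    · obtain ⟨j, hj, b, hb, hiff⟩ := key_lemma p k n hk y hy
      have hmem : (fun x => if (∑ i, x i * y i) = 0 then 1 else 0 : V) ∈ W j := by
        refine ⟨fun x => if (∑ i, x i * b i) = 0 then 1 else 0,
          Submodule.subset_span ⟨b, hb, rfl⟩, ?_⟩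
        funext x
        simp only [C, LinearMap.funLeft_apply]
        exact (if_congr (hiff x) rfl rfl).symm
      exact SetLike.mem_coe.mpr (Submodule.mem_sup_right (Finset.le_sup (f := W) hj hmem))
  refine (Submodule.finrank_mono hle).trans ?_
  refine (Submodule.finrank_add_le_finrank_add_finrank _ _).trans ?_
  refine Nat.add_le_add ?_ ?_
  · simpa using finrank_span_le_card ({g} : Set V)
  · refine (finrank_finsetSup_le _ _).trans ?_
    refine Finset.sum_le_sum fun j hj => ?_
    haveI : NeZero (p ^ j) := ⟨pow_ne_zero j hp.ne_zero⟩
    exact Submodule.finrank_map_le (C j) _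
end

section
/- Let n ≥ 2 and k ≥ 1, and set R = ℤ/p^kℤ. Let A = dim_{ℤ/pℤ} span{1_{H_b(a)} : a ∈ R^n, b a direction in R^n} (span inside functions R^n → ℤ/pℤ), and let W = dim_{ℤ/pℤ} span{1_{H_b} : b a direction in R^{n+1}} (span inside functions R^{n+1} → ℤ/pℤ, where H_b = H_b(0) is the hyperplane through the origin with normal b). Then A ≤ W ≤ 2(k+1)·A. -/
namespace Stmt4Aux

variable {p k : ℕ} [Fact p.Prime]

lemma pkNeZero : NeZero (p ^ k) := ⟨pow_ne_zero k (Fact.out : p.Prime).ne_zero⟩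

lemma pk_zero : ((p : ZMod (p ^ k)) ^ k) = 0 := by
  rw [← Nat.cast_pow, ZMod.natCast_self]

lemma exists_pow_mul_unit (t : ZMod (p ^ k)) :
    ∃ j, j ≤ k ∧ ∃ u : ZMod (p ^ k), IsUnit u ∧ t = (p : ZMod (p ^ k)) ^ j * u := by
  haveI := pkNeZero (p := p) (k := k)
  have hp : p.Prime := Fact.out
  by_cases ht : t = 0
  · exact ⟨k, le_rfl, 1, isUnit_one, by rw [ht, mul_one, pk_zero]⟩
  · have htv : t.val ≠ 0 := fun h => ht ((ZMod.val_eq_zero t).mp h)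
    set j := (t.val).factorization p with hjdef
    set m := t.val / p ^ j with hmdef
    have hmul : p ^ j * m = t.val := Nat.ordProj_mul_ordCompl_eq_self t.val p
    have hpm : ¬ p ∣ m := Nat.not_dvd_ordCompl hp htv
    have hjk : j ≤ k := by
      have h1 : p ^ j ≤ t.val := Nat.le_of_dvd (Nat.pos_of_ne_zero htv) ⟨m, hmul.symm⟩
      have h2 : t.val < p ^ k := ZMod.val_lt t
      exact le_of_lt ((Nat.pow_lt_pow_iff_right hp.one_lt).mp (lt_of_le_of_lt h1 h2))
    refine ⟨j, hjk, (m : ZMod (p ^ k)), ?_, ?_⟩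
    · exact (ZMod.isUnit_iff_coprime m (p ^ k)).mpr
        (((hp.coprime_iff_not_dvd).mpr hpm).symm.pow_right k)
    · have : t = ((t.val : ℕ) : ZMod (p ^ k)) := by
        rw [ZMod.natCast_val, ZMod.cast_id]
      rw [this, ← hmul]
      push_cast
      ring

lemma exists_of_pow_mul_eq_zero {j : ℕ} (hj : j ≤ k) {c : ZMod (p ^ k)}
    (h : (p : ZMod (p ^ k)) ^ j * c = 0) :
    ∃ w, w < p ^ j ∧ c = (w : ZMod (p ^ k)) * (p : ZMod (p ^ k)) ^ (k - j) := by
  haveI := pkNeZero (p := p) (k := k)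
  have hp : p.Prime := Fact.out
  have h0 : ((p ^ j * c.val : ℕ) : ZMod (p ^ k)) = 0 := by
    push_cast
    rw [ZMod.natCast_val, ZMod.cast_id]
    exact h
  have hdvd : p ^ k ∣ p ^ j * c.val := (ZMod.natCast_eq_zero_iff _ _).mp h0
  have hsplit : p ^ k = p ^ j * p ^ (k - j) := by rw [← pow_add, Nat.add_sub_cancel' hj]
  obtain ⟨q, hq⟩ := hdvd
  have hq2 : p ^ j * c.val = p ^ j * (p ^ (k - j) * q) := by rw [hq, hsplit, mul_assoc]
  have hcv : c.val = p ^ (k - j) * q := Nat.eq_of_mul_eq_mul_left (pow_pos hp.pos j) hq2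
  refine ⟨q, ?_, ?_⟩
  · have hlt : p ^ (k - j) * q < p ^ (k - j) * p ^ j := by
      rw [← hcv]
      calc c.val < p ^ k := ZMod.val_lt c
      _ = p ^ (k - j + j) := by rw [Nat.sub_add_cancel hj]
      _ = p ^ (k - j) * p ^ j := (pow_add p (k-j) j)
    exact lt_of_mul_lt_mul_left hlt (Nat.zero_le _)
  · have : c = ((c.val : ℕ) : ZMod (p ^ k)) := by rw [ZMod.natCast_val, ZMod.cast_id]
    rw [this, hcv]
    push_cast
    ring

lemma pow_mul_cast_inj {j : ℕ} (hj : j ≤ k) {w w' : ℕ} (hw : w < p ^ j) (hw' : w' < p ^ j)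
    (h : (w : ZMod (p ^ k)) * (p : ZMod (p ^ k)) ^ (k - j)
       = (w' : ZMod (p ^ k)) * (p : ZMod (p ^ k)) ^ (k - j)) : w = w' := by
  haveI := pkNeZero (p := p) (k := k)
  have hp : p.Prime := Fact.out
  have h1 : ((w * p ^ (k - j) : ℕ) : ZMod (p ^ k)) = ((w' * p ^ (k - j) : ℕ) : ZMod (p ^ k)) := by
    push_cast
    exact h
  have key : ∀ v : ℕ, v < p ^ j → v * p ^ (k - j) < p ^ k := by
    intro v hv
    have h1 : v * p ^ (k - j) < p ^ j * p ^ (k - j) :=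
      (Nat.mul_lt_mul_right (pow_pos hp.pos _)).mpr hv
    have h2 : p ^ j * p ^ (k - j) = p ^ k := by rw [← pow_add, Nat.add_sub_cancel' hj]
    omega
  have h2 := congrArg ZMod.val h1
  rw [ZMod.val_cast_of_lt (key w hw), ZMod.val_cast_of_lt (key w' hw')] at h2
  exact Nat.eq_of_mul_eq_mul_right (pow_pos hp.pos _) h2


section Span
variable (p k n : ℕ) [Fact p.Prime]

abbrev VA : Submodule (ZMod p) ((Fin n → ZMod (p ^ k)) → ZMod p) :=
  Submodule.span (ZMod p)
    {f : (Fin n → ZMod (p ^ k)) → ZMod p |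
      ∃ (a b : Fin n → ZMod (p ^ k)), (∃ i, IsUnit (b i)) ∧
        f = fun x => if (∑ i, (x i - a i) * b i) = 0 then 1 else 0}

abbrev VW : Submodule (ZMod p) ((Fin (n + 1) → ZMod (p ^ k)) → ZMod p) :=
  Submodule.span (ZMod p)
    {f : (Fin (n + 1) → ZMod (p ^ k)) → ZMod p |
      ∃ b : Fin (n + 1) → ZMod (p ^ k), (∃ i, IsUnit (b i)) ∧
        f = fun x => if (∑ i, x i * b i) = 0 then 1 else 0}

variable {p k n}

lemma sum_sub_eq (a d : Fin n → ZMod (p ^ k)) (x : Fin n → ZMod (p ^ k)) :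
    ∑ i, (x i - a i) * d i = (∑ i, x i * d i) - (∑ i, a i * d i) := by
  rw [← Finset.sum_sub_distrib]
  exact Finset.sum_congr rfl fun i _ => by ring

lemma gen_mem (d : Fin n → ZMod (p ^ k)) (hd : ∃ i, IsUnit (d i)) (e : ZMod (p ^ k)) :
    (fun x : Fin n → ZMod (p ^ k) => if (∑ i, x i * d i) = e then (1 : ZMod p) else 0)
      ∈ VA p k n := by
  obtain ⟨i₀, hi₀⟩ := hd
  obtain ⟨u, hu⟩ := hi₀
  apply Submodule.subset_span
  refine ⟨fun l => if l = i₀ then e * (↑u⁻¹ : ZMod (p ^ k)) else 0, d, ⟨i₀, ⟨u, hu⟩⟩, ?_⟩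
  have hsum : ∑ i, (if i = i₀ then e * (↑u⁻¹ : ZMod (p ^ k)) else 0) * d i = e := by
    have hstep : ∀ i ∈ Finset.univ, (if i = i₀ then e * (↑u⁻¹ : ZMod (p ^ k)) else 0) * d i
        = if i = i₀ then e * (↑u⁻¹ : ZMod (p ^ k)) * d i else 0 := by
      intro i _
      split <;> simp
    rw [Finset.sum_congr rfl hstep,
      Finset.sum_ite_eq' Finset.univ i₀ (fun i => e * (↑u⁻¹ : ZMod (p ^ k)) * d i)]
    simp only [Finset.mem_univ, if_true, ← hu]
    rw [mul_assoc]
    simp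
  funext x
  rw [sum_sub_eq, hsum]
  exact (if_congr (sub_eq_zero) rfl rfl).symm

lemma thick_mem (hn : 1 ≤ n) (d : Fin n → ZMod (p ^ k)) (e : ZMod (p ^ k)) :
    (fun x : Fin n → ZMod (p ^ k) => if (∑ i, x i * d i) = e then (1 : ZMod p) else 0)
      ∈ VA p k n := by
  choose j hjk u hu hdu using fun i => exists_pow_mul_unit (d i)
  have hne : (Finset.univ : Finset (Fin n)).Nonempty := ⟨⟨0, hn⟩, Finset.mem_univ _⟩
  obtain ⟨i₀, -, hi₀⟩ := Finset.exists_mem_eq_inf' hne j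
  set J := Finset.univ.inf' hne j with hJdef
  have hJle : ∀ i, J ≤ j i := fun i => Finset.inf'_le _ (Finset.mem_univ i)
  have hJk : J ≤ k := le_trans (hJle i₀) (hjk i₀)
  set d' : Fin n → ZMod (p ^ k) := fun i => (p : ZMod (p ^ k)) ^ (j i - J) * u i with hd'
  have hdd : ∀ i, d i = (p : ZMod (p ^ k)) ^ J * d' i := by
    intro i
    rw [hd', hdu i, ← mul_assoc, ← pow_add, Nat.add_sub_cancel' (hJle i)]
  have hdir : IsUnit (d' i₀) := by
    have h0 : j i₀ - J = 0 := by omega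
    have hval : d' i₀ = u i₀ := by rw [hd']; simp only [h0, pow_zero, one_mul]
    rw [hval]
    exact hu i₀
  have hxs : ∀ x : Fin n → ZMod (p ^ k),
      ∑ i, x i * d i = (p : ZMod (p ^ k)) ^ J * ∑ i, x i * d' i := by
    intro x
    rw [Finset.mul_sum]
    exact Finset.sum_congr rfl fun i _ => by rw [hdd i]; ring
  by_cases he : ∃ e', e = (p : ZMod (p ^ k)) ^ J * e'
  · obtain ⟨e', he'⟩ := he
    have key : (fun x : Fin n → ZMod (p ^ k) =>
          if (∑ i, x i * d i) = e then (1 : ZMod p) else 0)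
        = ∑ w ∈ Finset.range (p ^ J), fun x : Fin n → ZMod (p ^ k) =>
            if (∑ i, x i * d' i)
              = e' + (w : ZMod (p ^ k)) * (p : ZMod (p ^ k)) ^ (k - J) then (1 : ZMod p)
            else 0 := by
      funext x
      rw [Finset.sum_apply]
      set s := ∑ i, x i * d' i with hs
      rw [hxs x, he']
      by_cases h0 : (p : ZMod (p ^ k)) ^ J * (s - e') = 0
      · obtain ⟨w₀, hw₀lt, hw₀⟩ := exists_of_pow_mul_eq_zero hJk h0
        have hcond : (p : ZMod (p ^ k)) ^ J * s = (p : ZMod (p ^ k)) ^ J * e' := by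
          have h0' := h0
          rw [mul_sub, sub_eq_zero] at h0'
          exact h0'
        rw [if_pos hcond]
        have hterm : ∀ w ∈ Finset.range (p ^ J),
            (if s = e' + (w : ZMod (p ^ k)) * (p : ZMod (p ^ k)) ^ (k - J) then (1 : ZMod p)
             else 0)
            = if w = w₀ then 1 else 0 := by
          intro w hw
          refine if_congr ⟨fun h => ?_, fun h => ?_⟩ rfl rfl
          · refine pow_mul_cast_inj hJk (Finset.mem_range.mp hw) hw₀lt ?_
            rw [← hw₀]
            rw [h]
            ring
          · subst h
            rw [← hw₀]
            ring
        rw [Finset.sum_congr rfl hterm, Finset.sum_ite_eq' (Finset.range (p ^ J)) w₀ (fun _ => (1 : ZMod p))]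
        rw [if_pos (Finset.mem_range.mpr hw₀lt)]
      · have hc : ¬ ((p : ZMod (p ^ k)) ^ J * s = (p : ZMod (p ^ k)) ^ J * e') := fun h =>
          h0 (by rw [mul_sub, h, sub_self])
        rw [if_neg hc]
        symm
        apply Finset.sum_eq_zero
        intro w hw
        rw [if_neg]
        intro h
        apply h0
        rw [h]
        have : (p : ZMod (p ^ k)) ^ J * (e' + (w : ZMod (p ^ k)) * (p : ZMod (p ^ k)) ^ (k - J) - e')
            = (w : ZMod (p ^ k)) * ((p : ZMod (p ^ k)) ^ J * (p : ZMod (p ^ k)) ^ (k - J)) := by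
          ring
        rw [this, ← pow_add, Nat.add_sub_cancel' hJk, pk_zero, mul_zero]
    rw [key]
    exact Submodule.sum_mem _ fun w _ => gen_mem d' ⟨i₀, hdir⟩ _
  · have hz : (fun x : Fin n → ZMod (p ^ k) =>
        if (∑ i, x i * d i) = e then (1 : ZMod p) else 0) = 0 := by
      funext x
      rw [if_neg fun h => he ⟨∑ i, x i * d' i, by rw [← h, hxs x]⟩]
      rfl
    rw [hz]
    exact Submodule.zero_mem _


lemma vw_invariant {f : (Fin (n + 1) → ZMod (p ^ k)) → ZMod p} (hf : f ∈ VW p k n)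
    (u : (ZMod (p ^ k))ˣ) (y : Fin (n + 1) → ZMod (p ^ k)) :
    f (fun i => (u : ZMod (p ^ k)) * y i) = f y := by
  induction hf using Submodule.span_induction with
  | mem g hg =>
    obtain ⟨b, hb, rfl⟩ := hg
    have hsum : ∑ i, ((u : ZMod (p ^ k)) * y i) * b i
        = (u : ZMod (p ^ k)) * ∑ i, y i * b i := by
      rw [Finset.mul_sum]
      exact Finset.sum_congr rfl fun i _ => by ring
    simp only [hsum]
    exact if_congr (u.isUnit.mul_right_eq_zero) rfl rfl
  | zero => rfl
  | add g h _ _ ihg ihh => simp only [Pi.add_apply, ihg, ihh]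
  | smul a g _ ih => simp only [Pi.smul_apply, ih]

/-- restriction to the slice where the last coordinate equals `c`. -/
noncomputable def resMap (p k n : ℕ) (c : ZMod (p ^ k)) :
    ((Fin (n + 1) → ZMod (p ^ k)) → ZMod p) →ₗ[ZMod p] ((Fin n → ZMod (p ^ k)) → ZMod p) :=
  LinearMap.funLeft (ZMod p) (ZMod p) (fun x => Fin.snoc x c)

lemma resMap_gen (c : ZMod (p ^ k)) (b : Fin (n + 1) → ZMod (p ^ k)) :
    resMap p k n c (fun x => if (∑ i, x i * b i) = 0 then (1 : ZMod p) else 0)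
      = fun x : Fin n → ZMod (p ^ k) =>
        if (∑ i, x i * b i.castSucc) = -(c * b (Fin.last n)) then (1 : ZMod p) else 0 := by
  funext x
  show (if (∑ i, (Fin.snoc x c : Fin (n+1) → ZMod (p ^ k)) i * b i) = 0 then (1 : ZMod p) else 0) = _
  rw [Fin.sum_univ_castSucc]
  simp only [Fin.snoc_castSucc, Fin.snoc_last]
  exact if_congr (by constructor <;> intro h <;> linear_combination h) rfl rfl

lemma resMap_mem (hn : 1 ≤ n) (c : ZMod (p ^ k)) {f : (Fin (n + 1) → ZMod (p ^ k)) → ZMod p}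
    (hf : f ∈ VW p k n) : resMap p k n c f ∈ VA p k n := by
  have hle : Submodule.map (resMap p k n c) (VW p k n) ≤ VA p k n := by
    rw [Submodule.map_span, Submodule.span_le]
    rintro - ⟨g, ⟨b, hb, rfl⟩, rfl⟩
    rw [SetLike.mem_coe, resMap_gen]
    exact thick_mem hn _ _
  exact hle ⟨f, hf, rfl⟩

end Span
end Stmt4Aux

open Stmt4Aux in
/-- With `A` the dimension of the span of affine-hyperplane indicators in
`R^n` and `W` the dimension of the span of homogeneous-hyperplane indicators in `R^{n+1}`
(`R = ℤ/p^kℤ`, `n ≥ 2`, `k ≥ 1`), one has `A ≤ W ≤ 2(k+1)·A`. -/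
theorem stmt_4 (p k n : ℕ) [Fact p.Prime] (hn : 2 ≤ n) (hk : 1 ≤ k) :
    Module.finrank (ZMod p)
      (Submodule.span (ZMod p)
        {f : (Fin n → ZMod (p ^ k)) → ZMod p |
          ∃ (a b : Fin n → ZMod (p ^ k)), (∃ i, IsUnit (b i)) ∧
            f = fun x => if (∑ i, (x i - a i) * b i) = 0 then 1 else 0}) ≤
    Module.finrank (ZMod p)
      (Submodule.span (ZMod p)
        {f : (Fin (n + 1) → ZMod (p ^ k)) → ZMod p |
          ∃ b : Fin (n + 1) → ZMod (p ^ k), (∃ i, IsUnit (b i)) ∧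
            f = fun x => if (∑ i, x i * b i) = 0 then 1 else 0}) ∧
    Module.finrank (ZMod p)
      (Submodule.span (ZMod p)
        {f : (Fin (n + 1) → ZMod (p ^ k)) → ZMod p |
          ∃ b : Fin (n + 1) → ZMod (p ^ k), (∃ i, IsUnit (b i)) ∧
            f = fun x => if (∑ i, x i * b i) = 0 then 1 else 0}) ≤
    2 * (k + 1) *
      Module.finrank (ZMod p)
        (Submodule.span (ZMod p)
          {f : (Fin n → ZMod (p ^ k)) → ZMod p |
            ∃ (a b : Fin n → ZMod (p ^ k)), (∃ i, IsUnit (b i)) ∧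
              f = fun x => if (∑ i, (x i - a i) * b i) = 0 then 1 else 0}) := by
  haveI := pkNeZero (p := p) (k := k)
  have hn1 : 1 ≤ n := le_trans (by norm_num) hn
  constructor
  · -- A ≤ W
    have hsub : VA p k n ≤ Submodule.map (resMap p k n 1) (VW p k n) := by
      rw [Submodule.span_le]
      rintro - ⟨a, b, hb, rfl⟩
      refine ⟨fun y => if (∑ i, y i * (Fin.snoc b (-(∑ i, a i * b i)) : Fin (n+1) → ZMod (p ^ k)) i) = 0 then (1 : ZMod p) else 0, ?_, ?_⟩
      · apply Submodule.subset_span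
        obtain ⟨i, hi⟩ := hb
        exact ⟨Fin.snoc b (-(∑ i, a i * b i)), ⟨i.castSucc, by rwa [Fin.snoc_castSucc]⟩, rfl⟩
      · rw [resMap_gen]
        funext x
        refine if_congr ?_ rfl rfl
        rw [Fin.snoc_last, sum_sub_eq]
        have hbc : ∀ i : Fin n,
            (Fin.snoc b (-(∑ i, a i * b i)) : Fin (n+1) → ZMod (p ^ k)) i.castSucc = b i :=
          fun i => Fin.snoc_castSucc _ _ _
        have hsc : (∑ i, x i * (Fin.snoc b (-(∑ i, a i * b i)) :
            Fin (n+1) → ZMod (p ^ k)) i.castSucc) = ∑ i, x i * b i :=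
          Finset.sum_congr rfl fun i _ => by rw [hbc i]
        rw [hsc]
        constructor <;> intro h <;> linear_combination h
    calc Module.finrank (ZMod p) (VA p k n)
        ≤ Module.finrank (ZMod p) (Submodule.map (resMap p k n 1) (VW p k n)) :=
          Submodule.finrank_mono hsub
      _ ≤ Module.finrank (ZMod p) (VW p k n) := Submodule.finrank_map_le _ _
  · -- W ≤ 2(k+1)A
    set L : VW p k n →ₗ[ZMod p] (Fin (k + 1) → VA p k n) :=
      LinearMap.pi (fun j => LinearMap.codRestrict (VA p k n)
        ((resMap p k n ((p : ZMod (p ^ k)) ^ (j : ℕ))).domRestrict (VW p k n))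
        (fun f => resMap_mem hn1 _ f.2)) with hL
    have hinj : Function.Injective L := by
      rw [← LinearMap.ker_eq_bot, eq_bot_iff]
      rintro ⟨f, hf⟩ hker
      have hres : ∀ j : Fin (k + 1), ∀ x : Fin n → ZMod (p ^ k),
          f (Fin.snoc x ((p : ZMod (p ^ k)) ^ (j : ℕ))) = 0 := by
        intro j x
        exact congrFun (congrArg Subtype.val (congrFun (LinearMap.mem_ker.mp hker) j)) x
      have hzero : f = 0 := by
        funext y
        obtain ⟨j, hjk, v, hv, hval⟩ := exists_pow_mul_unit (y (Fin.last n))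
        obtain ⟨u, hu⟩ := hv
        set z : Fin (n + 1) → ZMod (p ^ k) := fun i => (↑u⁻¹ : ZMod (p ^ k)) * y i with hz
        have hyz : f y = f z := by
          have h1 : (fun i => (u : ZMod (p ^ k)) * z i) = y := by
            funext i
            rw [hz]
            simp [← mul_assoc, Units.mul_inv_cancel_left]
          have h2 := vw_invariant hf u z
          rw [h1] at h2
          exact h2
        have hzlast : z (Fin.last n) = (p : ZMod (p ^ k)) ^ j := by
          rw [hz]
          simp only [hval, ← hu]
          rw [mul_comm ((p : ZMod (p^k))^j) _, ← mul_assoc, Units.inv_mul, one_mul]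
        have hfz : f z = 0 := by
          have hsnoc : z = Fin.snoc (Fin.init z) ((p : ZMod (p ^ k)) ^ j) := by
            rw [← hzlast, Fin.snoc_init_self]
          rw [hsnoc]
          have hjlt : j < k + 1 := Nat.lt_succ_of_le hjk
          exact hres ⟨j, hjlt⟩ (Fin.init z)
        rw [hyz, hfz]
        rfl
      exact (Submodule.mem_bot _).mpr (Subtype.ext hzero)
    have hle1 : Module.finrank (ZMod p) (VW p k n)
        ≤ Module.finrank (ZMod p) (Fin (k + 1) → VA p k n) :=
      LinearMap.finrank_le_finrank_of_injective hinj
    have hle2 : Module.finrank (ZMod p) (Fin (k + 1) → VA p k n)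
        = (k + 1) * Module.finrank (ZMod p) (VA p k n) := by
      rw [Module.finrank_pi_fintype]
      simp [Finset.sum_const, Finset.card_univ]
    have : Module.finrank (ZMod p) (VW p k n)
        ≤ (k + 1) * Module.finrank (ZMod p) (VA p k n) := hle2 ▸ hle1
    calc Module.finrank (ZMod p) (VW p k n)
        ≤ (k + 1) * Module.finrank (ZMod p) (VA p k n) := this
      _ ≤ 2 * ((k + 1) * Module.finrank (ZMod p) (VA p k n)) :=
          Nat.le_mul_of_pos_left _ (by norm_num)
      _ = 2 * (k + 1) * Module.finrank (ZMod p) (VA p k n) := (mul_assoc 2 _ _).symm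
end

section
/- Let k ≥ 2 and R = ℤ/p^kℤ. Then the dimension over ℤ/pℤ of the span of the functions x ↦ 1[⟨x,y⟩ = 0 in R] for y ranging over all of R² (inside functions R² → ℤ/pℤ) is strictly greater than the dimension over ℤ/pℤ of the span of the functions x ↦ 1[⟨x,b⟩ = 0 in R] for b ranging only over the directions of R². -/
open Finset

section helpers

variable {p k : ℕ} [hp : Fact p.Prime]

lemma unit_iff_not_dvd (hk : 1 ≤ k) (x : ZMod (p ^ k)) :
    IsUnit x ↔ ¬ p ∣ x.val := by
  haveI : NeZero (p ^ k) := ⟨pow_ne_zero _ hp.out.pos.ne'⟩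
  have : x = ((x.val : ℕ) : ZMod (p ^ k)) := by
    rw [ZMod.natCast_val, ZMod.cast_id]
  conv_lhs => rw [this]
  rw [ZMod.isUnit_iff_coprime, Nat.coprime_pow_right_iff hk,
    Nat.coprime_comm, Nat.Prime.coprime_iff_not_dvd hp.out]

lemma p_not_unit (hk : 1 ≤ k) : ¬ IsUnit ((p : ZMod (p ^ k))) := by
  haveI : NeZero (p ^ k) := ⟨pow_ne_zero _ hp.out.pos.ne'⟩
  rw [ZMod.isUnit_iff_coprime, Nat.coprime_pow_right_iff hk]
  exact fun h => hp.out.ne_one ((Nat.coprime_self p).mp h)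

lemma exists_p_mul (hk : 1 ≤ k) {x : ZMod (p ^ k)} (hx : ¬ IsUnit x) :
    ∃ c : ZMod (p ^ k), x = (p : ZMod (p ^ k)) * c := by
  haveI : NeZero (p ^ k) := ⟨pow_ne_zero _ hp.out.pos.ne'⟩
  rw [unit_iff_not_dvd hk, not_not] at hx
  obtain ⟨c, hc⟩ := hx
  refine ⟨(c : ZMod (p ^ k)), ?_⟩
  have : x = ((x.val : ℕ) : ZMod (p ^ k)) := by
    rw [ZMod.natCast_val, ZMod.cast_id]
  rw [this, hc]
  push_cast
  ring

end helpers

section counts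

variable {p k : ℕ} [hp : Fact p.Prime]

lemma pmul_eq_iff_nat (hk : 1 ≤ k) (s t : ℕ) :
    ((p * s : ℕ) : ZMod (p ^ k)) = ((p * t : ℕ) : ZMod (p ^ k)) ↔ s ≡ t [MOD p ^ (k - 1)] := by
  haveI : NeZero (p ^ k) := ⟨pow_ne_zero _ hp.out.pos.ne'⟩
  have hpk : p ^ k = p * p ^ (k - 1) := by
    conv_lhs => rw [show k = 1 + (k - 1) by omega]
    rw [pow_add, pow_one]
  rw [ZMod.natCast_eq_natCast_iff, hpk]
  exact ⟨Nat.ModEq.mul_left_cancel' hp.out.pos.ne', Nat.ModEq.mul_left' p⟩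

lemma pmul_eq_iff (hk : 1 ≤ k) (s : ℕ) (m : ZMod (p ^ k)) :
    (p : ZMod (p ^ k)) * s = (p : ZMod (p ^ k)) * m ↔ s ≡ m.val [MOD p ^ (k - 1)] := by
  haveI : NeZero (p ^ k) := ⟨pow_ne_zero _ hp.out.pos.ne'⟩
  have hm : (m : ZMod (p ^ k)) = ((m.val : ℕ) : ZMod (p ^ k)) := by
    rw [ZMod.natCast_val, ZMod.cast_id]
  conv_lhs => rw [hm, ← Nat.cast_mul, ← Nat.cast_mul]
  exact pmul_eq_iff_nat (p := p) (k := k) hk s m.val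

lemma count_unit (hk : 1 ≤ k) {b0 : ZMod (p ^ k)} (b1 : ZMod (p ^ k)) (hb0 : IsUnit b0) :
    (∑ t : ZMod (p ^ k), if t * b0 + b1 = 0 then (1 : ZMod p) else 0) = 1 := by
  haveI : NeZero (p ^ k) := ⟨pow_ne_zero _ hp.out.pos.ne'⟩
  have hiff : ∀ t : ZMod (p ^ k), (t * b0 + b1 = 0) ↔ t = -b1 * b0⁻¹ := by
    intro t
    constructor
    · intro h
      have : t * b0 = -b1 := by linear_combination h
      rw [← this, mul_assoc, ZMod.mul_inv_of_unit _ hb0, mul_one]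
    · intro h
      rw [h, mul_assoc, ZMod.inv_mul_of_unit _ hb0, mul_one]
      ring
  calc (∑ t : ZMod (p ^ k), if t * b0 + b1 = 0 then (1 : ZMod p) else 0)
      = ∑ t : ZMod (p ^ k), if t = -b1 * b0⁻¹ then (1 : ZMod p) else 0 :=
        Finset.sum_congr rfl fun t _ => by rw [if_congr (hiff t) rfl rfl]
    _ = 1 := by rw [Finset.sum_ite_eq' Finset.univ]; simp

lemma count_nonunit (hk : 1 ≤ k) {b0 b1 : ZMod (p ^ k)} (hb0 : ¬ IsUnit b0) (hb1 : IsUnit b1) :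
    (∑ s ∈ Finset.range (p ^ (k - 1)),
      if b0 + (p : ZMod (p ^ k)) * s * b1 = 0 then (1 : ZMod p) else 0) = 1 := by
  haveI : NeZero (p ^ k) := ⟨pow_ne_zero _ hp.out.pos.ne'⟩
  obtain ⟨c, hc⟩ := exists_p_mul hk hb0
  set m : ZMod (p ^ k) := -c * b1⁻¹ with hm
  have hiff : ∀ s : ℕ, (b0 + (p : ZMod (p ^ k)) * s * b1 = 0) ↔ s ≡ m.val [MOD p ^ (k - 1)] := by
    intro s
    rw [← pmul_eq_iff hk]
    constructor
    · intro h
      have h2 : ((p : ZMod (p ^ k)) * s * b1) * b1⁻¹ = (-b0) * b1⁻¹ := by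
        rw [show (p : ZMod (p ^ k)) * s * b1 = -b0 by linear_combination h]
      rw [mul_assoc, ZMod.mul_inv_of_unit _ hb1, mul_one] at h2
      rw [h2, hc, hm]; ring
    · intro h
      have : (p : ZMod (p ^ k)) * s * b1 = ((p : ZMod (p ^ k)) * m) * b1 := by rw [h]
      rw [this, hc, hm]
      have : b1⁻¹ * b1 = 1 := ZMod.inv_mul_of_unit _ hb1
      linear_combination (-((p : ZMod (p ^ k)) * c)) * this
  have hmem : m.val % p ^ (k - 1) ∈ Finset.range (p ^ (k - 1)) :=
    Finset.mem_range.mpr (Nat.mod_lt _ (pow_pos hp.out.pos _))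
  calc (∑ s ∈ Finset.range (p ^ (k - 1)),
        if b0 + (p : ZMod (p ^ k)) * s * b1 = 0 then (1 : ZMod p) else 0)
      = ∑ s ∈ Finset.range (p ^ (k - 1)),
          if s = m.val % p ^ (k - 1) then (1 : ZMod p) else 0 := by
        refine Finset.sum_congr rfl fun s hs => ?_
        refine if_congr ?_ rfl rfl
        rw [hiff s]
        constructor
        · intro h
          rw [Nat.ModEq] at h
          rw [← Nat.mod_eq_of_lt (Finset.mem_range.mp hs), h]
        · intro h
          rw [h]
          exact (Nat.mod_modEq m.val (p ^ (k - 1)))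
    _ = 1 := by rw [Finset.sum_ite_eq' _]; simp [hmem]

end counts

section more

variable {p k : ℕ} [hp : Fact p.Prime]

lemma pkm1_ne_zero (hk : 2 ≤ k) : ((p : ZMod (p ^ k)) ^ (k - 1)) ≠ 0 := by
  haveI : NeZero (p ^ k) := ⟨pow_ne_zero _ hp.out.pos.ne'⟩
  have : ((p : ZMod (p ^ k)) ^ (k - 1)) = ((p ^ (k - 1) : ℕ) : ZMod (p ^ k)) := by push_cast; ring
  rw [this, Ne, ZMod.natCast_eq_zero_iff]
  intro h
  have := Nat.le_of_dvd (pow_pos hp.out.pos _) h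
  have := Nat.pow_lt_pow_right hp.out.one_lt (show k - 1 < k by omega)
  omega

lemma S1_count (hk : 2 ≤ k) :
    (∑ t : ZMod (p ^ k), if t * (p : ZMod (p ^ k)) ^ (k - 1) = 0 then (1 : ZMod p) else 0) = 0 := by
  haveI : NeZero (p ^ k) := ⟨pow_ne_zero _ hp.out.pos.ne'⟩
  rw [Finset.sum_boole]
  have hpk : p ^ k = p * p ^ (k - 1) := by
    conv_lhs => rw [show k = 1 + (k - 1) by omega]
    rw [pow_add, pow_one]
  have hiff : ∀ t : ZMod (p ^ k), t * (p : ZMod (p ^ k)) ^ (k - 1) = 0 ↔ p ∣ t.val := by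
    intro t
    have ht : t = ((t.val : ℕ) : ZMod (p ^ k)) := by rw [ZMod.natCast_val, ZMod.cast_id]
    conv_lhs => rw [ht]
    rw [show ((t.val : ℕ) : ZMod (p ^ k)) * (p : ZMod (p ^ k)) ^ (k - 1)
        = ((t.val * p ^ (k - 1) : ℕ) : ZMod (p ^ k)) by push_cast; ring]
    rw [ZMod.natCast_eq_zero_iff]
    rw [show (p ^ k ∣ t.val * p ^ (k - 1)) ↔ (p * p ^ (k - 1) ∣ t.val * p ^ (k - 1)) by rw [← hpk]]
    rw [Nat.mul_dvd_mul_iff_right (pow_pos hp.out.pos (k - 1))]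
  have hcard : (Finset.filter (fun t : ZMod (p ^ k) =>
      t * (p : ZMod (p ^ k)) ^ (k - 1) = 0) Finset.univ).card = p ^ (k - 1) := by
    rw [← Finset.card_range (p ^ (k - 1))]
    apply Finset.card_nbij' (fun t => t.val / p) (fun s => ((p * s : ℕ) : ZMod (p ^ k)))
    · intro t ht
      rw [Finset.mem_coe, Finset.mem_filter] at ht
      have hdvd := (hiff t).mp ht.2
      have hlt : t.val < p ^ k := ZMod.val_lt t
      rw [Finset.mem_coe, Finset.mem_range]
      have hlt2 : t.val < p ^ (k - 1) * p := by rw [mul_comm, ← hpk]; exact hlt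
      exact (Nat.div_lt_iff_lt_mul hp.out.pos).mpr hlt2
    · intro s hs
      rw [Finset.mem_coe, Finset.mem_range] at hs
      rw [Finset.mem_coe, Finset.mem_filter]
      beta_reduce
      refine ⟨Finset.mem_univ _, (hiff _).mpr ?_⟩
      rw [ZMod.val_natCast]
      exact (Nat.dvd_mod_iff (dvd_pow_self p (by omega : k ≠ 0))).mpr ⟨s, rfl⟩
    · intro t ht
      rw [Finset.mem_coe, Finset.mem_filter] at ht
      have hdvd := (hiff t).mp ht.2
      beta_reduce
      rw [Nat.mul_div_cancel' hdvd, ZMod.natCast_val, ZMod.cast_id]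
    · intro s hs
      rw [Finset.mem_coe, Finset.mem_range] at hs
      beta_reduce
      rw [ZMod.val_natCast, Nat.mod_eq_of_lt (by rw [hpk]; exact (Nat.mul_lt_mul_left hp.out.pos).mpr hs),
        Nat.mul_div_cancel_left _ hp.out.pos]
  rw [hcard]
  have : ((p : ZMod p)) = 0 := ZMod.natCast_self p
  rw [show ((p ^ (k - 1) : ℕ) : ZMod p) = ((p : ZMod p)) ^ (k - 1) by push_cast; ring, this,
    zero_pow (by omega : k - 1 ≠ 0)]

end more

noncomputable def phi (p k : ℕ) [NeZero (p ^ k)] :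
    ((Fin 2 → ZMod (p ^ k)) → ZMod p) →ₗ[ZMod p] ZMod p where
  toFun f := (∑ t : ZMod (p ^ k), f ![t, 1])
      + (∑ s ∈ Finset.range (p ^ (k - 1)), f ![1, (p : ZMod (p ^ k)) * s])
      - f 0
  map_add' f g := by simp [Finset.sum_add_distrib]; ring
  map_smul' c f := by
    simp only [smul_eq_mul, Pi.smul_apply, RingHom.id_apply]
    rw [mul_sub, mul_add, Finset.mul_sum, Finset.mul_sum]

lemma phi_apply (p k : ℕ) [NeZero (p ^ k)] (f : (Fin 2 → ZMod (p ^ k)) → ZMod p) :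
    phi p k f = (∑ t : ZMod (p ^ k), f ![t, 1])
      + (∑ s ∈ Finset.range (p ^ (k - 1)), f ![1, (p : ZMod (p ^ k)) * s])
      - f 0 := rfl

/-- For `k ≥ 2` and `R = ℤ/p^kℤ`, the dimension of the span of the functions
`x ↦ 1[⟨x,y⟩ = 0]` on `R²` over all `y ∈ R²` is strictly greater than the dimension of the
span of the functions `x ↦ 1[⟨x,b⟩ = 0]` over directions `b` only. -/
theorem stmt_5 (p k : ℕ) [Fact p.Prime] (hk : 2 ≤ k) :
    Module.finrank (ZMod p)
      (Submodule.span (ZMod p)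
        {f : (Fin 2 → ZMod (p ^ k)) → ZMod p |
          ∃ b : Fin 2 → ZMod (p ^ k), (∃ i, IsUnit (b i)) ∧
            f = fun x => if (∑ i, x i * b i) = 0 then 1 else 0}) <
    Module.finrank (ZMod p)
      (Submodule.span (ZMod p)
        {f : (Fin 2 → ZMod (p ^ k)) → ZMod p |
          ∃ y : Fin 2 → ZMod (p ^ k),
            f = fun x => if (∑ i, x i * y i) = 0 then 1 else 0}) := by
  have hp : Fact p.Prime := ‹_›
  haveI : NeZero (p ^ k) := ⟨pow_ne_zero _ hp.out.pos.ne'⟩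
  haveI : Fact (1 < p) := ⟨hp.out.one_lt⟩
  have hk1 : 1 ≤ k := by omega
  set setD : Set ((Fin 2 → ZMod (p ^ k)) → ZMod p) :=
    {f | ∃ b : Fin 2 → ZMod (p ^ k), (∃ i, IsUnit (b i)) ∧
      f = fun x => if (∑ i, x i * b i) = 0 then 1 else 0} with hsetD
  set setA : Set ((Fin 2 → ZMod (p ^ k)) → ZMod p) :=
    {f | ∃ y : Fin 2 → ZMod (p ^ k),
      f = fun x => if (∑ i, x i * y i) = 0 then 1 else 0} with hsetA
  have hle : Submodule.span (ZMod p) setD ≤ Submodule.span (ZMod p) setA :=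
    Submodule.span_mono (fun f ⟨b, _, hf⟩ => ⟨b, hf⟩)
  -- the distinguished function
  set g : (Fin 2 → ZMod (p ^ k)) → ZMod p :=
    fun x => if (∑ i, x i * (![(p : ZMod (p ^ k)) ^ (k - 1), 0]) i) = 0 then 1 else 0 with hg
  have hgA : g ∈ Submodule.span (ZMod p) setA :=
    Submodule.subset_span ⟨![(p : ZMod (p ^ k)) ^ (k - 1), 0], rfl⟩
  -- phi vanishes on setD
  have hker : ∀ f ∈ setD, phi p k f = 0 := by
    rintro f ⟨b, hb, rfl⟩
    rw [phi_apply]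
    simp only [Fin.sum_univ_two, Matrix.cons_val_zero, Matrix.cons_val_one, Matrix.head_cons,
      Pi.zero_apply, zero_mul, add_zero, one_mul, if_true]
    by_cases hb0 : IsUnit (b 0)
    · rw [count_unit hk1 (b 1) hb0]
      have h2 : (∑ s ∈ Finset.range (p ^ (k - 1)),
          if b 0 + (p : ZMod (p ^ k)) * s * b 1 = 0 then (1 : ZMod p) else 0) = 0 := by
        apply Finset.sum_eq_zero
        intro s _
        rw [if_neg]
        intro h
        have : (p : ZMod (p ^ k)) * ((s : ZMod (p ^ k)) * b 1) = -b 0 := by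
          linear_combination h
        have hu : IsUnit ((p : ZMod (p ^ k)) * ((s : ZMod (p ^ k)) * b 1)) := by
          rw [this]; exact hb0.neg
        exact p_not_unit hk1 (isUnit_of_mul_isUnit_left hu)
      rw [h2]
      simp
    · have hb1 : IsUnit (b 1) := by
        obtain ⟨i, hi⟩ := hb
        fin_cases i
        · exact absurd hi hb0
        · exact hi
      have h1 : (∑ t : ZMod (p ^ k), if t * b 0 + b 1 = 0 then (1 : ZMod p) else 0) = 0 := by
        apply Finset.sum_eq_zero
        intro t _
        rw [if_neg]
        intro h
        have : t * b 0 = -b 1 := by linear_combination h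
        have hu : IsUnit (t * b 0) := by rw [this]; exact hb1.neg
        exact hb0 (isUnit_of_mul_isUnit_right hu)
      have h2 : (∑ s ∈ Finset.range (p ^ (k - 1)),
          if b 0 + (p : ZMod (p ^ k)) * s * b 1 = 0 then (1 : ZMod p) else 0) = 1 :=
        count_nonunit hk1 hb0 hb1
      rw [h1, h2]
      simp
  have hphig : phi p k g = -1 := by
    rw [phi_apply]
    simp only [hg, Fin.sum_univ_two, Matrix.cons_val_zero, Matrix.cons_val_one, Matrix.head_cons,
      Pi.zero_apply, zero_mul, add_zero, mul_zero, one_mul]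
    erw [S1_count hk]
    have h2 : (∑ s ∈ Finset.range (p ^ (k - 1)),
        if (p : ZMod (p ^ k)) ^ (k - 1) = 0 then (1 : ZMod p) else 0) = 0 := by
      apply Finset.sum_eq_zero
      intro s _
      rw [if_neg (pkm1_ne_zero hk)]
    erw [h2]
    simp
  have hgD : g ∉ Submodule.span (ZMod p) setD := by
    intro hmem
    have hspan : Submodule.span (ZMod p) setD ≤ LinearMap.ker (phi p k) :=
      Submodule.span_le.mpr (fun f hf => hker f hf)
    have := hspan hmem
    rw [LinearMap.mem_ker, hphig] at this
    exact (neg_ne_zero.mpr one_ne_zero) this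
  have hlt : Submodule.span (ZMod p) setD < Submodule.span (ZMod p) setA :=
    lt_of_le_of_ne hle (fun h => hgD (h.symm ▸ hgA))
  exact Submodule.finrank_lt_finrank_of_lt hlt
end

section
/- Let p be prime, k ≥ 1, and m a natural number with m < p^k. If x, y are nonnegative integers with x ≡ y (mod p^k), then C(x, m) ≡ C(y, m) (mod p), where C denotes the binomial coefficient. -/
/-- If `p` is prime, `k ≥ 1`, `m < p ^ k`, and `x ≡ y (mod p^k)` for
nonnegative integers `x, y`, then `C(x,m) ≡ C(y,m) (mod p)`. -/
theorem stmt_6 (p k m x y : ℕ) (hp : p.Prime) (hk : 1 ≤ k) (hm : m < p ^ k)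
    (h : x ≡ y [MOD p ^ k]) : x.choose m ≡ y.choose m [MOD p] := by
  haveI : Fact p.Prime := ⟨hp⟩
  have hx := Choose.choose_modEq_choose_mul_prod_range_choose (n := x) (k := m) (p := p) k
  have hy := Choose.choose_modEq_choose_mul_prod_range_choose (n := y) (k := m) (p := p) k
  have hdig : ∀ i < k, x / p ^ i % p = y / p ^ i % p := by
    intro i hi
    have hdvd : p ^ (i + 1) ∣ p ^ k := pow_dvd_pow p hi
    have hx1 : x / p ^ i % p = x % p ^ (i + 1) / p ^ i := by
      rw [← Nat.mod_mul_right_div_self, pow_succ]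
    have hy1 : y / p ^ i % p = y % p ^ (i + 1) / p ^ i := by
      rw [← Nat.mod_mul_right_div_self, pow_succ]
    rw [hx1, hy1, ← Nat.mod_mod_of_dvd x hdvd, ← Nat.mod_mod_of_dvd y hdvd, h]
  have hprod : (∏ i ∈ Finset.range k, (x / p ^ i % p).choose (m / p ^ i % p)) =
      ∏ i ∈ Finset.range k, (y / p ^ i % p).choose (m / p ^ i % p) := by
    apply Finset.prod_congr rfl
    intro i hi
    rw [hdig i (Finset.mem_range.mp hi)]
  have hm0 : m / p ^ k = 0 := Nat.div_eq_of_lt hm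
  simp only [hm0, Nat.choose_zero_right, Nat.cast_one, one_mul] at hx hy
  rw [← Int.natCast_modEq_iff]
  calc (x.choose m : ℤ) ≡ _ [ZMOD p] := by exact hx
    _ ≡ (y.choose m : ℤ) [ZMOD p] := by rw [hprod]; exact_mod_cast hy.symm
end
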